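/- arXiv:0803.2341 — 8 statements merged into one kernel-verified Lean document; each statement's English description precedes it below -/
import Mathlib

section
/- If u(t) satisfies the Ince-V equation u'' = -2u u' + q(t) u' + q'(t) u (with u nonvanishing), then the functions x = 1/u and y = u' + u² - q(t)u satisfy the system x' = -x²y - q(t)x + 1 and y' = 0. -/
/-- Ince-V: if `u'' = -2 u u' + q u' + q' u` with `u` nonvanishing, then
`x = 1/u`, `y = u' + u² - q u` satisfy `x' = -x² y - q x + 1`, `y' = 0`. -/
theorem ince_V (q u : ℝ → ℂ)
    (hq : Differentiable ℝ q)
    (hu : Differentiable ℝ u) (hu' : Differentiable ℝ (deriv u))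
    (hne : ∀ t, u t ≠ 0)
    (hode : ∀ t, deriv (deriv u) t =
      -2 * u t * deriv u t + q t * deriv u t + deriv q t * u t) :
    ∀ t, deriv (fun s => (u s)⁻¹) t =
        -((u t)⁻¹) ^ 2 * (deriv u t + (u t) ^ 2 - q t * u t)
          - q t * (u t)⁻¹ + 1 ∧
      deriv (fun s => deriv u s + (u s) ^ 2 - q s * u s) t = 0 := by
  intro t
  have hut : HasDerivAt u (deriv u t) t := (hu t).hasDerivAt
  have hqt : HasDerivAt q (deriv q t) t := (hq t).hasDerivAt
  have hut' : HasDerivAt (deriv u) (deriv (deriv u) t) t := (hu' t).hasDerivAt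
  constructor
  · have h0 : HasDerivAt (fun s => (u s)⁻¹)
        ((0 * u t - 1 * deriv u t) / u t ^ 2) t := by
      have h := (hasDerivAt_const t (1 : ℂ)).div hut (hne t)
      simpa only [Pi.div_def, one_div] using h
    rw [h0.deriv]
    field_simp [hne t]
    ring
  · have hsq : HasDerivAt (fun s => (u s) ^ 2) (2 * u t * deriv u t) t := by
      have h := hut.mul hut
      simp only [pow_two]
      convert h using 1
      · rfl
      · rfl
      · ring
    have hmul : HasDerivAt (fun s => q s * u s)
        (deriv q t * u t + q t * deriv u t) t := hqt.mul hut
    have h1 : HasDerivAt (fun s => deriv u s + (u s) ^ 2 - q s * u s)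
        (deriv (deriv u) t + 2 * u t * deriv u t
          - (deriv q t * u t + q t * deriv u t)) t := (hut'.add hsq).sub hmul
    rw [h1.deriv, hode t]
    ring
end

section
/- The function H(x,y) = x²y²/2 - (α/2)x² - (γ/δ)xy + δy - βx is a first integral of the system x' = x²y - (γ/δ)x + δ, y' = -xy² + αx + (γ/δ)y + β; i.e., for any solution (x(t), y(t)), the quantity H(x(t), y(t)) is constant. -/
/-- `H = x²y²/2 - (α/2)x² - (γ/δ)xy + δy - βx` is a first integral of the
Ince-XII system. -/
theorem ince_XII_first_integral (α β γ δ : ℂ) (hδ : δ ≠ 0) (x y : ℝ → ℂ)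
    (hx : Differentiable ℝ x) (hy : Differentiable ℝ y)
    (hx' : ∀ t, deriv x t = (x t) ^ 2 * y t - (γ / δ) * x t + δ)
    (hy' : ∀ t, deriv y t = -(x t) * (y t) ^ 2 + α * x t + (γ / δ) * y t + β) :
    ∀ t₁ t₂ : ℝ,
      (x t₁) ^ 2 * (y t₁) ^ 2 / 2 - (α / 2) * (x t₁) ^ 2
          - (γ / δ) * x t₁ * y t₁ + δ * y t₁ - β * x t₁ =
      (x t₂) ^ 2 * (y t₂) ^ 2 / 2 - (α / 2) * (x t₂) ^ 2
          - (γ / δ) * x t₂ * y t₂ + δ * y t₂ - β * x t₂ := by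
  set H : ℝ → ℂ := fun t =>
    (x t) ^ 2 * (y t) ^ 2 / 2 - (α / 2) * (x t) ^ 2
      - (γ / δ) * x t * y t + δ * y t - β * x t with hH
  have key : ∀ t, HasDerivAt H 0 t := by
    intro t
    set a : ℂ := (x t) ^ 2 * y t - (γ / δ) * x t + δ with ha
    set b : ℂ := -(x t) * (y t) ^ 2 + α * x t + (γ / δ) * y t + β with hb
    have hxt : HasDerivAt x a t := by rw [ha, ← hx' t]; exact (hx t).hasDerivAt
    have hyt : HasDerivAt y b t := by rw [hb, ← hy' t]; exact (hy t).hasDerivAt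
    have hx2 : HasDerivAt (fun t => (x t) ^ 2) (2 * x t * a) t := by
      have := hxt.mul hxt
      simp only [← pow_two] at this
      exact this.congr_deriv (by ring)
    have hy2 : HasDerivAt (fun t => (y t) ^ 2) (2 * y t * b) t := by
      have := hyt.mul hyt
      simp only [← pow_two] at this
      exact this.congr_deriv (by ring)
    have h1 := (hx2.mul hy2).div_const 2
    have h2 := hx2.const_mul (α / 2)
    have h3 := (hxt.const_mul (γ / δ)).mul hyt
    have h4 := hyt.const_mul δ
    have h5 := hxt.const_mul β
    have h := (((h1.sub h2).sub h3).add h4).sub h5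
    refine h.congr_deriv ?_
    rw [ha, hb]
    field_simp
    ring
  have := fun t₁ t₂ => is_const_of_deriv_eq_zero (fun t => (key t).differentiableAt)
    (fun t => (key t).deriv) t₁ t₂
  intro t₁ t₂
  exact this t₁ t₂
end

section
/- The transformation s₂ : (x, y) ↦ (x, y - 2γ/(δx) + 2δ/x²), (α,β,γ,δ) ↦ (α,β,γ,-δ) maps solutions of the system x' = x²y - (γ/δ)x + δ, y' = -xy² + αx + (γ/δ)y + β with parameters (α,β,γ,δ) to solutions of the same system with parameters (α,β,γ,-δ), wherever x is nonvanishing. -/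
/-- The Bäcklund transformation `s₂ : (x,y) ↦ (x, y - 2γ/(δx) + 2δ/x²)`,
`(α,β,γ,δ) ↦ (α,β,γ,-δ)` maps solutions of the Ince-XII system with parameters
`(α,β,γ,δ)` to solutions with parameters `(α,β,γ,-δ)`. -/
theorem ince_XII_backlund (α β γ δ : ℂ) (hδ : δ ≠ 0) (x y : ℝ → ℂ)
    (hx : Differentiable ℝ x) (hy : Differentiable ℝ y)
    (hne : ∀ t, x t ≠ 0)
    (hx' : ∀ t, deriv x t = (x t) ^ 2 * y t - (γ / δ) * x t + δ)
    (hy' : ∀ t, deriv y t = -(x t) * (y t) ^ 2 + α * x t + (γ / δ) * y t + β) :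
    ∀ t, deriv x t =
        (x t) ^ 2 * (y t - 2 * γ / (δ * x t) + 2 * δ / (x t) ^ 2)
          - (γ / (-δ)) * x t + (-δ) ∧
      deriv (fun s => y s - 2 * γ / (δ * x s) + 2 * δ / (x s) ^ 2) t =
        -(x t) * (y t - 2 * γ / (δ * x t) + 2 * δ / (x t) ^ 2) ^ 2 + α * x t
          + (γ / (-δ)) * (y t - 2 * γ / (δ * x t) + 2 * δ / (x t) ^ 2) + β := by
  intro t
  have hxt := (hx t).hasDerivAt
  have hyt := (hy t).hasDerivAt
  have hδx : δ * x t ≠ 0 := mul_ne_zero hδ (hne t)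
  have hx2 : (x t) ^ 2 ≠ 0 := pow_ne_zero 2 (hne t)
  constructor
  · rw [hx' t]
    have hxt0 := hne t
    field_simp
    ring
  · have h1 : HasDerivAt (fun s => 2 * γ / (δ * x s))
        ((0 * (δ * x t) - 2 * γ * (0 * x t + δ * deriv x t)) / (δ * x t) ^ 2) t :=
      (hasDerivAt_const t (2 * γ)).div ((hasDerivAt_const t δ).mul hxt) hδx
    have hxx : x t * x t ≠ 0 := mul_ne_zero (hne t) (hne t)
    have h2 : HasDerivAt (fun s => 2 * δ / (x s * x s))
        ((0 * (x t * x t) - 2 * δ * (deriv x t * x t + x t * deriv x t)) / (x t * x t) ^ 2) t :=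
      (hasDerivAt_const t (2 * δ)).div (hxt.mul hxt) hxx
    have hfun : (fun s => y s - 2 * γ / (δ * x s) + 2 * δ / (x s) ^ 2)
        = fun s => y s - 2 * γ / (δ * x s) + 2 * δ / (x s * x s) := by
      funext s; rw [sq]
    have H : HasDerivAt (fun s => y s - 2 * γ / (δ * x s) + 2 * δ / (x s * x s)) _ t :=
      (hyt.sub h1).add h2
    rw [hfun, H.deriv, hy' t, hx' t]
    have hxt0 := hne t
    field_simp
    ring
end

section
/- The function I(x,y) = x(4x - y²)² is a first integral of the system x' = xy, y' = -y²/4 + 3x; i.e., along any solution (x(t), y(t)) the quantity x(4x - y²)² is constant. -/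
/-- `I = x (4x - y²)²` is a first integral of the Ince-XXI system
`x' = x y`, `y' = -y²/4 + 3x`. -/
theorem ince_XXI_first_integral (x y : ℝ → ℂ)
    (hx : Differentiable ℝ x) (hy : Differentiable ℝ y)
    (hx' : ∀ t, deriv x t = x t * y t)
    (hy' : ∀ t, deriv y t = -(y t) ^ 2 / 4 + 3 * x t) :
    ∀ t₁ t₂ : ℝ,
      x t₁ * (4 * x t₁ - (y t₁) ^ 2) ^ 2 =
      x t₂ * (4 * x t₂ - (y t₂) ^ 2) ^ 2 := by
  have hF : Differentiable ℝ (fun t => x t * (4 * x t - (y t) ^ 2) ^ 2) := by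
    fun_prop
  intro t₁ t₂
  apply is_const_of_deriv_eq_zero hF
  intro t
  have hxt := (hx t).hasDerivAt
  have hyt := (hy t).hasDerivAt
  rw [hx' t] at hxt
  rw [hy' t] at hyt
  have h2 := hyt.mul hyt
  have h3 := (hxt.const_mul (4:ℂ)).sub h2
  have h4 := h3.mul h3
  have h := hxt.mul h4
  simp only [pow_two]
  rw [show (fun t => x t * ((4 * x t - y t * y t) * (4 * x t - y t * y t))) = x * (((fun y => 4 * x y) - y * y) * ((fun y => 4 * x y) - y * y)) from rfl, h.deriv]
  simp only [Pi.mul_apply, Pi.sub_apply]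
  ring
end

section
/- For any constants c₁, c₂ ∈ ℂ, the pair x(t) = (t²/4 + c₁t/2 + c₂)/(t + c₁), y(t) = -1/(t + c₁) solves the system x' = xy + 1/2, y' = y² (away from t = -c₁). -/
/-- For any `c₁ c₂ : ℂ`, `x = (t²/4 + c₁ t/2 + c₂)/(t + c₁)`,
`y = -1/(t + c₁)` solves `x' = x y + 1/2`, `y' = y²` away from `t = -c₁`. -/
theorem ince_XXII_solution (c₁ c₂ : ℂ) :
    ∀ t : ℝ, (t : ℂ) ≠ -c₁ →
      deriv (fun s : ℝ =>
          ((s : ℂ) ^ 2 / 4 + c₁ * s / 2 + c₂) / ((s : ℂ) + c₁)) t =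
        (((t : ℂ) ^ 2 / 4 + c₁ * t / 2 + c₂) / ((t : ℂ) + c₁))
          * (-1 / ((t : ℂ) + c₁)) + 1 / 2 ∧
      deriv (fun s : ℝ => -1 / ((s : ℂ) + c₁)) t =
        (-1 / ((t : ℂ) + c₁)) ^ 2 := by
  intro t ht
  have hd : (t : ℂ) + c₁ ≠ 0 := by
    intro h; apply ht; linear_combination h
  have hnum : HasDerivAt (fun z : ℂ => z ^ 2 / 4 + c₁ * z / 2 + c₂)
      ((t : ℂ) / 2 + c₁ / 2) t := by
    have h1 : HasDerivAt (fun z : ℂ => z ^ 2 / 4 + c₁ * z / 2 + c₂)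
        ((2 * (t:ℂ) ^ 1 / 4 + c₁ / 2 + 0)) t := by
      have := ((hasDerivAt_pow 2 (t : ℂ)).div_const 4).add
        (((hasDerivAt_id (t : ℂ)).const_mul c₁).div_const 2)
      simpa using this.add_const c₂
    convert h1 using 1; ring
  have hden : HasDerivAt (fun z : ℂ => z + c₁) 1 t := by
    simpa using (hasDerivAt_id (t : ℂ)).add_const c₁
  constructor
  · have h := ((hnum.div hden hd).comp_ofReal).deriv
    erw [h]
    field_simp
    ring
  · have hinv : HasDerivAt (fun z : ℂ => -1 / (z + c₁))
        ((0 * ((t:ℂ) + c₁) - (-1) * 1) / ((t:ℂ) + c₁) ^ 2) t :=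
      (hasDerivAt_const (t : ℂ) (-1)).div hden hd
    have h := (hinv.comp_ofReal).deriv
    rw [h]
    field_simp
    ring
end

section
/- The transformation s₂ : (x,y) ↦ (x, y + 2γ/x), (α,β,γ) ↦ (α,β,-γ) maps solutions of the system x' = xy + γ, y' = (3/2)x² - (1/2)y² + 4αx + 2β with parameters (α,β,γ) to solutions with parameters (α,β,-γ), wherever x is nonvanishing. -/
/-- The Bäcklund transformation `s₂ : (x,y) ↦ (x, y + 2γ/x)`,
`(α,β,γ) ↦ (α,β,-γ)` maps solutions of the Ince-XXX system with parameters
`(α,β,γ)` to solutions with parameters `(α,β,-γ)`. -/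
theorem ince_XXX_backlund (α β γ : ℂ) (x y : ℝ → ℂ)
    (hx : Differentiable ℝ x) (hy : Differentiable ℝ y)
    (hne : ∀ t, x t ≠ 0)
    (hx' : ∀ t, deriv x t = x t * y t + γ)
    (hy' : ∀ t, deriv y t =
      (3 / 2) * (x t) ^ 2 - (1 / 2) * (y t) ^ 2 + 4 * α * x t + 2 * β) :
    ∀ t, deriv x t = x t * (y t + 2 * γ / x t) + (-γ) ∧
      deriv (fun s => y s + 2 * γ / x s) t =
        (3 / 2) * (x t) ^ 2 - (1 / 2) * (y t + 2 * γ / x t) ^ 2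
          + 4 * α * x t + 2 * β := by
  intro t
  have hxt : HasDerivAt x (deriv x t) t := (hx t).hasDerivAt
  have hyt : HasDerivAt y (deriv y t) t := (hy t).hasDerivAt
  have hdiv : HasDerivAt (fun s => 2 * γ / x s)
      ((0 * x t - 2 * γ * deriv x t) / (x t) ^ 2) t :=
    (hasDerivAt_const t (2 * γ)).div hxt (hne t)
  have hsum : HasDerivAt (fun s => y s + 2 * γ / x s) _ t := hyt.add hdiv
  constructor
  · rw [hx' t]
    field_simp [hne t]
    ring
  · rw [hsum.deriv, hy' t, hx' t]
    field_simp [hne t]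
    ring
end

section
/- The function H(x,y) = xy²/2 - x³/2 - 2αx² - 2βx + γy is a first integral of the system x' = xy + γ, y' = (3/2)x² - (1/2)y² + 4αx + 2β. -/
/-- `H = x y²/2 - x³/2 - 2α x² - 2β x + γ y` is a first integral of the
Ince-XXX system `x' = x y + γ`, `y' = (3/2)x² - (1/2)y² + 4αx + 2β`. -/
theorem ince_XXX_first_integral (α β γ : ℂ) (x y : ℝ → ℂ)
    (hx : Differentiable ℝ x) (hy : Differentiable ℝ y)
    (hx' : ∀ t, deriv x t = x t * y t + γ)
    (hy' : ∀ t, deriv y t =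
      (3 / 2) * (x t) ^ 2 - (1 / 2) * (y t) ^ 2 + 4 * α * x t + 2 * β) :
    ∀ t₁ t₂ : ℝ,
      x t₁ * (y t₁) ^ 2 / 2 - (x t₁) ^ 3 / 2 - 2 * α * (x t₁) ^ 2
          - 2 * β * x t₁ + γ * y t₁ =
      x t₂ * (y t₂) ^ 2 / 2 - (x t₂) ^ 3 / 2 - 2 * α * (x t₂) ^ 2
          - 2 * β * x t₂ + γ * y t₂ := by
  set H : ℝ → ℂ := fun t =>
    x t * (y t) ^ 2 / 2 - (x t) ^ 3 / 2 - 2 * α * (x t) ^ 2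
      - 2 * β * x t + γ * y t with hH
  have hHdiff : Differentiable ℝ H := by
    fun_prop
  have hderiv : ∀ t, deriv H t = 0 := by
    intro t
    have hxt := (hx t).hasDerivAt
    have hyt := (hy t).hasDerivAt
    rw [hx' t] at hxt
    rw [hy' t] at hyt
    have hx2 := hxt.mul hxt
    have hx3 := hx2.mul hxt
    have hy2 := hyt.mul hyt
    have h := (((((hxt.mul hy2).div_const 2).sub (hx3.div_const 2)).sub
        (hx2.const_mul (2 * α))).sub (hxt.const_mul (2 * β))).add (hyt.const_mul γ)
    have hzero : HasDerivAt H 0 t := by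
      convert h using 1
      · rfl
      · funext s
        simp only [hH, Pi.add_apply, Pi.sub_apply, Pi.mul_apply, Pi.pow_apply]
        ring
      · simp only [Pi.mul_apply]
        ring
    exact hzero.deriv
  intro t₁ t₂
  exact is_const_of_deriv_eq_zero hHdiff hderiv t₁ t₂
end

section
/- The transformation s₀ : (x,y,z) ↦ (x + c₁/z, y - 2c₁x/z - c₁²/z², z) with parameter change (c₁,c₂) ↦ (-c₁, -6c₁ + c₂) maps solutions of the system x' = y, y' = -2xy - 3xz - (3c₁+c₂)/4, z' = 2xz + c₁ with parameters (c₁,c₂) to solutions with parameters (-c₁, -6c₁+c₂), wherever z is nonvanishing; moreover s₀ is an involution. -/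
/-- The transformation `s₀ : (x,y,z) ↦ (x + c₁/z, y - 2c₁x/z - c₁²/z², z)`,
`(c₁,c₂) ↦ (-c₁, -6c₁ + c₂)` maps solutions of the system
`x' = y`, `y' = -2xy - 3xz - (3c₁+c₂)/4`, `z' = 2xz + c₁` with parameters
`(c₁,c₂)` to solutions with parameters `(-c₁, -6c₁+c₂)` (where `z ≠ 0`),
and `s₀` is an involution. -/
theorem ince_XXXV_backlund (c₁ c₂ : ℂ) (x y z : ℝ → ℂ)
    (hx : Differentiable ℝ x) (hy : Differentiable ℝ y)
    (hz : Differentiable ℝ z) (hne : ∀ t, z t ≠ 0)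
    (hx' : ∀ t, deriv x t = y t)
    (hy' : ∀ t, deriv y t = -2 * x t * y t - 3 * x t * z t - (3 * c₁ + c₂) / 4)
    (hz' : ∀ t, deriv z t = 2 * x t * z t + c₁) :
    (∀ t,
      deriv (fun s => x s + c₁ / z s) t =
        y t - 2 * c₁ * x t / z t - c₁ ^ 2 / (z t) ^ 2 ∧
      deriv (fun s => y s - 2 * c₁ * x s / z s - c₁ ^ 2 / (z s) ^ 2) t =
        -2 * (x t + c₁ / z t) * (y t - 2 * c₁ * x t / z t - c₁ ^ 2 / (z t) ^ 2)
          - 3 * (x t + c₁ / z t) * z t - (3 * (-c₁) + (-6 * c₁ + c₂)) / 4 ∧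
      deriv z t = 2 * (x t + c₁ / z t) * z t + (-c₁)) ∧
    ((∀ X Y Z : ℂ, Z ≠ 0 →
        (X + c₁ / Z) + (-c₁) / Z = X ∧
        (Y - 2 * c₁ * X / Z - c₁ ^ 2 / Z ^ 2)
            - 2 * (-c₁) * (X + c₁ / Z) / Z - (-c₁) ^ 2 / Z ^ 2 = Y) ∧
      -(-c₁) = c₁ ∧ -6 * (-c₁) + (-6 * c₁ + c₂) = c₂) := by
  constructor
  · intro t
    have hxt := (hx t).hasDerivAt
    have hyt := (hy t).hasDerivAt
    have hzt := (hz t).hasDerivAt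
    rw [hx' t] at hxt
    rw [hy' t] at hyt
    rw [hz' t] at hzt
    have hZ := hne t
    have h1 : HasDerivAt (fun s => x s + c₁ / z s)
        (y t + (0 * z t - c₁ * (2 * x t * z t + c₁)) / z t ^ 2) t :=
      hxt.add ((hasDerivAt_const t c₁).div hzt hZ)
    have h2 : HasDerivAt (fun s => y s - 2 * c₁ * x s / z s - c₁ ^ 2 / z s ^ 2)
        ((-2 * x t * y t - 3 * x t * z t - (3 * c₁ + c₂) / 4)
          - (2 * c₁ * y t * z t - 2 * c₁ * x t * (2 * x t * z t + c₁)) / z t ^ 2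
          - (0 * z t ^ 2 - c₁ ^ 2 * (2 * z t ^ (2 - 1) * (2 * x t * z t + c₁))) / (z t ^ 2) ^ 2) t := by
      have hpow : HasDerivAt (fun s => z s ^ 2)
          (2 * z t ^ (2 - 1) * (2 * x t * z t + c₁)) t := by
        have : HasDerivAt (fun s => z s * z s) _ t := hzt.mul hzt
        simp only [pow_two]
        convert this using 1
        ring
      exact (hyt.sub (((hxt.const_mul (2 * c₁)).div hzt hZ))).sub
        (((hasDerivAt_const t (c₁ ^ 2)).div hpow (pow_ne_zero 2 hZ)))
    refine ⟨?_, ?_, ?_⟩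
    · rw [h1.deriv]; field_simp [hZ]; ring
    · rw [h2.deriv]; field_simp [hZ]; ring
    · rw [hz' t]; field_simp [hZ]; ring
  · refine ⟨fun X Y Z hZ => ⟨by field_simp [hZ]; ring, by field_simp [hZ]; ring⟩, by ring, by ring⟩
end
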